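/- Let δ ∈ ℝ^p satisfy ‖δ_{T^c}‖₁ ≤ u‖δ_T‖₁ for a set T with |T| = s, and let T₁ be the indices of the m largest components of δ in absolute value. Then ‖δ‖₂ ≤ ‖δ_{T₁}‖₂ + (1+u)√(s/m) ‖δ_T‖₂ ≤ {1 + (1+u)√(s/m)} ‖δ_{T₁}‖₂. -/

import Mathlib

open Finset

/-- If `δ` lies in the cone `C_T(u)` with `|T| = s` and `T₁` collects the `m`
largest-magnitude coordinates of `δ`, then
`‖δ‖₂ ≤ ‖δ_{T₁}‖₂ + (1+u)√(s/m)‖δ_T‖₂ ≤ {1+(1+u)√(s/m)}‖δ_{T₁}‖₂`. -/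
theorem l2_cone_largest_block_bound {p s m : ℕ}
    (hs : 0 < s) (hsm : s ≤ m) (hmp : m ≤ p) (u : ℝ) (hu : 0 < u)
    (δ : Fin p → ℝ) (T T₁ : Finset (Fin p))
    (hT : T.card = s)
    (hcone : ∑ i ∈ Tᶜ, |δ i| ≤ u * ∑ i ∈ T, |δ i|)
    (hT₁card : T₁.card = m)
    (hT₁ : ∀ i ∈ T₁, ∀ j ∉ T₁, |δ j| ≤ |δ i|) :
    Real.sqrt (∑ i, (δ i) ^ 2) ≤
      Real.sqrt (∑ i ∈ T₁, (δ i) ^ 2) +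
        (1 + u) * Real.sqrt ((s : ℝ) / m) * Real.sqrt (∑ i ∈ T, (δ i) ^ 2) ∧
    Real.sqrt (∑ i ∈ T₁, (δ i) ^ 2) +
        (1 + u) * Real.sqrt ((s : ℝ) / m) * Real.sqrt (∑ i ∈ T, (δ i) ^ 2) ≤
      (1 + (1 + u) * Real.sqrt ((s : ℝ) / m)) *
        Real.sqrt (∑ i ∈ T₁, (δ i) ^ 2) := by
  have hm0 : (0:ℝ) < m := by exact_mod_cast hs.trans_le hsm
  have hT1nn : (0:ℝ) ≤ ∑ i ∈ T₁, (δ i) ^ 2 := Finset.sum_nonneg fun i _ => sq_nonneg _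
  have hTnn : (0:ℝ) ≤ ∑ i ∈ T, (δ i) ^ 2 := Finset.sum_nonneg fun i _ => sq_nonneg _
  have hT1cnn : (0:ℝ) ≤ ∑ i ∈ T₁ᶜ, (δ i) ^ 2 := Finset.sum_nonneg fun i _ => sq_nonneg _
  have hu1 : (0:ℝ) ≤ 1 + u := by linarith
  -- ℓ1 quantities
  set A1 : ℝ := ∑ i ∈ T₁, |δ i| with hA1
  set B1 : ℝ := ∑ i ∈ T₁ᶜ, |δ i| with hB1
  have hA1nn : 0 ≤ A1 := Finset.sum_nonneg fun i _ => abs_nonneg _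
  have hB1nn : 0 ≤ B1 := Finset.sum_nonneg fun i _ => abs_nonneg _
  set L : ℝ := ∑ i, |δ i| with hL
  have hsplit1 : L = A1 + B1 := by
    rw [hA1, hB1, hL, ← Finset.sum_add_sum_compl T₁]
  have hLT : L = (∑ i ∈ T, |δ i|) + ∑ i ∈ Tᶜ, |δ i| := by
    rw [hL, ← Finset.sum_add_sum_compl T]
  -- L ≤ (1+u) ∑_T |δ|
  have hL1 : L ≤ (1 + u) * ∑ i ∈ T, |δ i| := by
    rw [hLT]; ring_nf; nlinarith [hcone]
  -- Cauchy–Schwarz on T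
  have hCS : (∑ i ∈ T, |δ i|) ^ 2 ≤ (s : ℝ) * ∑ i ∈ T, (δ i) ^ 2 := by
    have := sq_sum_le_card_mul_sum_sq (s := T) (f := fun i => |δ i|)
    simpa [hT, sq_abs] using this
  have hTl1nn : (0:ℝ) ≤ ∑ i ∈ T, |δ i| := Finset.sum_nonneg fun i _ => abs_nonneg _
  have hL2 : L ^ 2 ≤ (1 + u) ^ 2 * ((s : ℝ) * ∑ i ∈ T, (δ i) ^ 2) := by
    calc L ^ 2 ≤ ((1 + u) * ∑ i ∈ T, |δ i|) ^ 2 := by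
          apply pow_le_pow_left₀ (by rw [hL]; positivity) hL1
      _ = (1 + u) ^ 2 * (∑ i ∈ T, |δ i|) ^ 2 := by ring
      _ ≤ (1 + u) ^ 2 * ((s : ℝ) * ∑ i ∈ T, (δ i) ^ 2) := by
          apply mul_le_mul_of_nonneg_left hCS (by positivity)
  -- tail bound: ∑_{T₁ᶜ} δ² ≤ L²/m
  have htail : ∑ i ∈ T₁ᶜ, (δ i) ^ 2 ≤ L ^ 2 / m := by
    have hstep : ∀ j ∈ T₁ᶜ, (δ j) ^ 2 ≤ |δ j| * (A1 / m) := by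
      intro j hj
      have hjn : j ∉ T₁ := Finset.mem_compl.mp hj
      have hmA : (m : ℝ) * |δ j| ≤ A1 := by
        have : ∑ _i ∈ T₁, |δ j| ≤ A1 :=
          Finset.sum_le_sum fun i hi => hT₁ i hi j hjn
        simpa [hT₁card, mul_comm] using this
      have h1 : |δ j| ≤ A1 / m := by
        rw [le_div_iff₀ hm0]; linarith [hmA]
      calc (δ j) ^ 2 = |δ j| * |δ j| := by rw [← sq_abs, sq]
        _ ≤ |δ j| * (A1 / m) := mul_le_mul_of_nonneg_left h1 (abs_nonneg _)
    calc ∑ i ∈ T₁ᶜ, (δ i) ^ 2 ≤ ∑ i ∈ T₁ᶜ, |δ i| * (A1 / m) :=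
          Finset.sum_le_sum hstep
      _ = B1 * A1 / m := by rw [← Finset.sum_mul]; ring
      _ ≤ L ^ 2 / m := by
          apply div_le_div_of_nonneg_right _ hm0.le
          nlinarith [hsplit1]
  have htail2 : ∑ i ∈ T₁ᶜ, (δ i) ^ 2 ≤
      (1 + u) ^ 2 * ((s : ℝ) / m) * ∑ i ∈ T, (δ i) ^ 2 := by
    calc ∑ i ∈ T₁ᶜ, (δ i) ^ 2 ≤ L ^ 2 / m := htail
      _ ≤ (1 + u) ^ 2 * ((s : ℝ) * ∑ i ∈ T, (δ i) ^ 2) / m :=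
          div_le_div_of_nonneg_right hL2 hm0.le
      _ = (1 + u) ^ 2 * ((s : ℝ) / m) * ∑ i ∈ T, (δ i) ^ 2 := by ring
  -- sqrt of tail bound
  have hsqrt_tail : Real.sqrt (∑ i ∈ T₁ᶜ, (δ i) ^ 2) ≤
      (1 + u) * Real.sqrt ((s : ℝ) / m) * Real.sqrt (∑ i ∈ T, (δ i) ^ 2) := by
    have h := Real.sqrt_le_sqrt htail2
    calc Real.sqrt (∑ i ∈ T₁ᶜ, (δ i) ^ 2)
        ≤ Real.sqrt ((1 + u) ^ 2 * ((s : ℝ) / m) * ∑ i ∈ T, (δ i) ^ 2) := h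
      _ = (1 + u) * Real.sqrt ((s : ℝ) / m) * Real.sqrt (∑ i ∈ T, (δ i) ^ 2) := by
          rw [Real.sqrt_mul (by positivity), Real.sqrt_mul (by positivity),
            Real.sqrt_sq hu1]
  -- first inequality
  have hfull : ∑ i, (δ i) ^ 2 = (∑ i ∈ T₁, (δ i) ^ 2) + ∑ i ∈ T₁ᶜ, (δ i) ^ 2 :=
    (Finset.sum_add_sum_compl T₁ _).symm
  have hfirst : Real.sqrt (∑ i, (δ i) ^ 2) ≤
      Real.sqrt (∑ i ∈ T₁, (δ i) ^ 2) + Real.sqrt (∑ i ∈ T₁ᶜ, (δ i) ^ 2) := by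
    rw [hfull]
    have : (∑ i ∈ T₁, (δ i) ^ 2) + ∑ i ∈ T₁ᶜ, (δ i) ^ 2 ≤
        (Real.sqrt (∑ i ∈ T₁, (δ i) ^ 2) + Real.sqrt (∑ i ∈ T₁ᶜ, (δ i) ^ 2)) ^ 2 := by
      have h1 := Real.sq_sqrt hT1nn
      have h2 := Real.sq_sqrt hT1cnn
      nlinarith [Real.sqrt_nonneg (∑ i ∈ T₁, (δ i) ^ 2),
        Real.sqrt_nonneg (∑ i ∈ T₁ᶜ, (δ i) ^ 2)]
    calc Real.sqrt ((∑ i ∈ T₁, (δ i) ^ 2) + ∑ i ∈ T₁ᶜ, (δ i) ^ 2)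
        ≤ Real.sqrt ((Real.sqrt (∑ i ∈ T₁, (δ i) ^ 2) +
            Real.sqrt (∑ i ∈ T₁ᶜ, (δ i) ^ 2)) ^ 2) := Real.sqrt_le_sqrt this
      _ = _ := Real.sqrt_sq (by positivity)
  -- ∑_T δ² ≤ ∑_{T₁} δ²
  have hTT1 : ∑ i ∈ T, (δ i) ^ 2 ≤ ∑ i ∈ T₁, (δ i) ^ 2 := by
    have hsplitT : ∑ i ∈ T, (δ i) ^ 2 =
        (∑ i ∈ T ∩ T₁, (δ i) ^ 2) + ∑ i ∈ T \ T₁, (δ i) ^ 2 :=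
      (Finset.sum_inter_add_sum_sdiff T T₁ _).symm
    have hsplitT1 : ∑ i ∈ T₁, (δ i) ^ 2 =
        (∑ i ∈ T₁ ∩ T, (δ i) ^ 2) + ∑ i ∈ T₁ \ T, (δ i) ^ 2 :=
      (Finset.sum_inter_add_sum_sdiff T₁ T _).symm
    have hcard : (T \ T₁).card ≤ (T₁ \ T).card := by
      have h1 : (T \ T₁).card + (T ∩ T₁).card = s := by
        rw [Finset.card_sdiff_add_card_inter, hT]
      have h2 : (T₁ \ T).card + (T₁ ∩ T).card = m := by
        rw [Finset.card_sdiff_add_card_inter, hT₁card]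
      have h3 : (T ∩ T₁).card = (T₁ ∩ T).card := by rw [Finset.inter_comm]
      omega
    have hdiff : ∑ i ∈ T \ T₁, (δ i) ^ 2 ≤ ∑ i ∈ T₁ \ T, (δ i) ^ 2 := by
      rcases Finset.eq_empty_or_nonempty (T \ T₁) with he | hne
      · rw [he, Finset.sum_empty]
        exact Finset.sum_nonneg fun i _ => sq_nonneg _
      · obtain ⟨j₀, hj₀mem, hj₀max⟩ :=
          Finset.exists_max_image (T \ T₁) (fun j => (δ j) ^ 2) hne
        have hj₀n : j₀ ∉ T₁ := (Finset.mem_sdiff.mp hj₀mem).2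
        calc ∑ i ∈ T \ T₁, (δ i) ^ 2 ≤ ∑ _i ∈ T \ T₁, (δ j₀) ^ 2 :=
              Finset.sum_le_sum hj₀max
          _ = (T \ T₁).card * (δ j₀) ^ 2 := by
              rw [Finset.sum_const, nsmul_eq_mul]
          _ ≤ (T₁ \ T).card * (δ j₀) ^ 2 := by
              apply mul_le_mul_of_nonneg_right _ (sq_nonneg _)
              exact_mod_cast hcard
          _ = ∑ _i ∈ T₁ \ T, (δ j₀) ^ 2 := by
              rw [Finset.sum_const, nsmul_eq_mul]
          _ ≤ ∑ i ∈ T₁ \ T, (δ i) ^ 2 := by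
              apply Finset.sum_le_sum
              intro i hi
              have hi1 : i ∈ T₁ := (Finset.mem_sdiff.mp hi).1
              have habs := hT₁ i hi1 j₀ hj₀n
              calc (δ j₀) ^ 2 = |δ j₀| ^ 2 := (sq_abs _).symm
                _ ≤ |δ i| ^ 2 := pow_le_pow_left₀ (abs_nonneg _) habs 2
                _ = (δ i) ^ 2 := sq_abs _
    rw [hsplitT, hsplitT1, Finset.inter_comm]
    linarith [hdiff]
  have hsqrtTT1 : Real.sqrt (∑ i ∈ T, (δ i) ^ 2) ≤
      Real.sqrt (∑ i ∈ T₁, (δ i) ^ 2) := Real.sqrt_le_sqrt hTT1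
  constructor
  · calc Real.sqrt (∑ i, (δ i) ^ 2)
        ≤ Real.sqrt (∑ i ∈ T₁, (δ i) ^ 2) + Real.sqrt (∑ i ∈ T₁ᶜ, (δ i) ^ 2) :=
          hfirst
      _ ≤ _ := by linarith [hsqrt_tail]
  · have hc : (1 + u) * Real.sqrt ((s : ℝ) / m) * Real.sqrt (∑ i ∈ T, (δ i) ^ 2) ≤
        (1 + u) * Real.sqrt ((s : ℝ) / m) * Real.sqrt (∑ i ∈ T₁, (δ i) ^ 2) := by
      apply mul_le_mul_of_nonneg_left hsqrtTT1 (by positivity)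
    have he : (1 + (1 + u) * Real.sqrt ((s : ℝ) / m)) * Real.sqrt (∑ i ∈ T₁, (δ i) ^ 2)
        = Real.sqrt (∑ i ∈ T₁, (δ i) ^ 2) +
          (1 + u) * Real.sqrt ((s : ℝ) / m) * Real.sqrt (∑ i ∈ T₁, (δ i) ^ 2) := by ring
    linarith [hc]
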